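/- In the exponential lower-bound instance with parameter n ≥ 1, let σ be any schedule in which job ℓ and job a₁ are on machine 1 and jobs b₁ and c₁ are on machine 2 (the remaining jobs assigned arbitrarily), and let σ' be the schedule obtained from σ by moving a₁ to machine 2 and moving b₁ and c₁ to machine 1, leaving all other jobs unchanged. Then σ' differs from σ on exactly 3 jobs and Cmax σ' < Cmax σ. -/

import Mathlib

/-- The jobs of the exponential lower-bound instance with parameter `n`:
jobs `a i`, `b i`, `c i` for each `i : Fin n` (`i` standing for the 1-based index
`i + 1`), together with the large job `l`. -/
inductive LBJob (n : ℕ) where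
  | a (i : Fin n)
  | b (i : Fin n)
  | c (i : Fin n)
  | l
  deriving DecidableEq, Fintype

/-- Processing times of the lower-bound instance: with 1-based index `i' = i + 1`,
`p (a i') = 2^(n+i'+1) + 2^(i'-1)`, `p (b i') = 2^(n+i')`,
`p (c i') = 2^(n+i'-1) + 2^(i'-1)`, and `p l = 2^(2n+4)`. -/
def lbp (n : ℕ) : LBJob n → ℕ
  | .a i => 2 ^ (n + i.1 + 2) + 2 ^ i.1
  | .b i => 2 ^ (n + i.1 + 1)
  | .c i => 2 ^ (n + i.1) + 2 ^ i.1
  | .l => 2 ^ (2 * n + 4)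

/-- Load of a machine (`false` = machine 1, `true` = machine 2). -/
def lbLoad (n : ℕ) (m : Bool) (σ : LBJob n → Bool) : ℕ :=
  ∑ j ∈ Finset.univ.filter (fun j => σ j = m), lbp n j

/-- Makespan of a schedule of the lower-bound instance. -/
def lbCmax (n : ℕ) (σ : LBJob n → Bool) : ℕ :=
  max (lbLoad n false σ) (lbLoad n true σ)

def lbEquiv (n : ℕ) : LBJob n ≃ (Fin n ⊕ Fin n ⊕ Fin n ⊕ Unit) where
  toFun j := match j with
    | .a i => .inl i
    | .b i => .inr (.inl i)
    | .c i => .inr (.inr (.inl i))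
    | .l => .inr (.inr (.inr ()))
  invFun x := match x with
    | .inl i => .a i
    | .inr (.inl i) => .b i
    | .inr (.inr (.inl i)) => .c i
    | .inr (.inr (.inr _)) => .l
  left_inv j := by cases j <;> rfl
  right_inv x := by rcases x with i | i | i | u <;> rfl

lemma sum_two_pow (n : ℕ) : ∑ i ∈ Finset.range n, 2 ^ i = 2 ^ n - 1 := by
  induction n with
  | zero => simp
  | succ k ih =>
    rw [Finset.sum_range_succ, ih, pow_succ]
    have := Nat.one_le_two_pow (n := k)
    omega

lemma lb_total_lt (n : ℕ) (hn : 1 ≤ n) :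
    ∑ j : LBJob n, lbp n j < 2 ^ (2 * n + 4) + 2 ^ (2 * n + 4) := by
  have h1 : ∑ j : LBJob n, lbp n j
      = (∑ i : Fin n, ((2 ^ (n + i.1 + 2) + 2 ^ i.1) + (2 ^ (n + i.1 + 1)
          + (2 ^ (n + i.1) + 2 ^ i.1)))) + 2 ^ (2 * n + 4) := by
    rw [Fintype.sum_equiv (lbEquiv n) _ (fun x => lbp n ((lbEquiv n).symm x))
      (fun j => by cases j <;> rfl)]
    simp [Fintype.sum_sum_type, lbEquiv, lbp, Finset.sum_add_distrib]
    ring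
  have h2 : ∀ i : Fin n, (2 ^ (n + i.1 + 2) + 2 ^ i.1) + (2 ^ (n + i.1 + 1)
      + (2 ^ (n + i.1) + 2 ^ i.1)) ≤ 2 ^ (n + i.1 + 3) := by
    intro i
    have hle : 2 ^ (i.1 + 1) ≤ 2 ^ (n + i.1) :=
      Nat.pow_le_pow_right (by norm_num) (by omega)
    have e1 : 2 ^ (n + i.1 + 1) = 2 * 2 ^ (n + i.1) := by ring
    have e2 : 2 ^ (n + i.1 + 2) = 4 * 2 ^ (n + i.1) := by ring
    have e3 : 2 ^ (n + i.1 + 3) = 8 * 2 ^ (n + i.1) := by ring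
    have e4 : 2 ^ (i.1 + 1) = 2 * 2 ^ i.1 := by ring
    omega
  have h3 : (∑ i : Fin n, ((2 ^ (n + i.1 + 2) + 2 ^ i.1) + (2 ^ (n + i.1 + 1)
      + (2 ^ (n + i.1) + 2 ^ i.1)))) ≤ ∑ i : Fin n, 2 ^ (n + i.1 + 3) :=
    Finset.sum_le_sum (fun i _ => h2 i)
  have h4 : ∑ i : Fin n, 2 ^ (n + i.1 + 3) < 2 ^ (2 * n + 4) := by
    have : ∑ i : Fin n, 2 ^ (n + i.1 + 3) = 2 ^ (n + 3) * (2 ^ n - 1) := by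
      rw [Fin.sum_univ_eq_sum_range (fun i => 2 ^ (n + i + 3)), ← sum_two_pow,
        Finset.mul_sum]
      congr 1; funext i; ring
    rw [this]
    calc 2 ^ (n + 3) * (2 ^ n - 1) ≤ 2 ^ (n + 3) * 2 ^ n :=
          Nat.mul_le_mul_left _ (Nat.sub_le _ _)
      _ = 2 ^ (2 * n + 3) := by rw [← pow_add]; congr 1; omega
      _ < 2 ^ (2 * n + 4) := Nat.pow_lt_pow_right (by norm_num) (by omega)
  omega

/-- Lemma (first improving 3-swap): if `ℓ` and `a₁` are on machine 1 and `b₁, c₁` are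
on machine 2, then moving `a₁` to machine 2 and `b₁, c₁` to machine 1 changes exactly
3 jobs and strictly decreases the makespan. -/
theorem lb_first_swap (n : ℕ) (hn : 1 ≤ n) (i1 : Fin n) (hi1 : i1.1 = 0)
    (σ σ' : LBJob n → Bool)
    (hl : σ .l = false)
    (ha : σ (.a i1) = false) (hb : σ (.b i1) = true) (hc : σ (.c i1) = true)
    (h'a : σ' (.a i1) = true) (h'b : σ' (.b i1) = false) (h'c : σ' (.c i1) = false)
    (h'rest : ∀ j : LBJob n, j ≠ .a i1 → j ≠ .b i1 → j ≠ .c i1 → σ' j = σ j) :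
    (Finset.univ.filter (fun j => σ j ≠ σ' j)).card = 3 ∧
    lbCmax n σ' < lbCmax n σ := by
  have hl' : σ' .l = false := by
    rw [h'rest _ (by simp) (by simp) (by simp)]; exact hl
  -- the set of changed jobs
  have hset : Finset.univ.filter (fun j => σ j ≠ σ' j)
      = {LBJob.a i1, LBJob.b i1, LBJob.c i1} := by
    ext j
    simp only [Finset.mem_filter, Finset.mem_univ, true_and, Finset.mem_insert,
      Finset.mem_singleton]
    constructor
    · intro h
      by_contra hcon
      push_neg at hcon
      exact h (h'rest j hcon.1 hcon.2.1 hcon.2.2).symm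
    · rintro (rfl | rfl | rfl) <;> simp [ha, hb, hc, h'a, h'b, h'c]
  have hcard : (Finset.univ.filter (fun j => σ j ≠ σ' j)).card = 3 := by
    rw [hset, Finset.card_insert_of_notMem (by simp),
      Finset.card_insert_of_notMem (by simp), Finset.card_singleton]
  refine ⟨hcard, ?_⟩
  -- loads as sums of ite over univ
  have loadf : ∀ (m : Bool) (τ : LBJob n → Bool),
      lbLoad n m τ = ∑ j : LBJob n, if τ j = m then lbp n j else 0 :=
    fun m τ => Finset.sum_filter _ _
  set t : Finset (LBJob n) := {LBJob.a i1, LBJob.b i1, LBJob.c i1} with ht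
  have hsplit : ∀ g : LBJob n → ℕ, ∑ j : LBJob n, g j
      = (∑ j ∈ Finset.univ \ t, g j)
        + (g (.a i1) + (g (.b i1) + g (.c i1))) := by
    intro g
    rw [← Finset.sum_sdiff (Finset.subset_univ t)]
    congr 1
  set R : ℕ := ∑ j ∈ Finset.univ \ t, (if σ j = false then lbp n j else 0) with hR
  have hRR : ∑ j ∈ Finset.univ \ t, (if σ' j = false then lbp n j else 0) = R := by
    refine Finset.sum_congr rfl fun j hj => ?_
    simp only [ht, Finset.mem_sdiff, Finset.mem_univ, true_and, Finset.mem_insert,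
      Finset.mem_singleton, not_or] at hj
    rw [h'rest j hj.1 hj.2.1 hj.2.2]
  have hL1 : lbLoad n false σ = R + lbp n (.a i1) := by
    rw [loadf, hsplit]; simp [ha, hb, hc, hR]
  have hL1' : lbLoad n false σ' = R + (lbp n (.b i1) + lbp n (.c i1)) := by
    rw [loadf, hsplit, hRR]; simp [h'a, h'b, h'c]
  -- key numeric relation between the three jobs
  have hkey : lbp n (.b i1) + lbp n (.c i1) + 2 ^ n = lbp n (.a i1) := by
    simp only [lbp, hi1]
    have e1 : 2 ^ (n + 0 + 1) = 2 * 2 ^ n := by ring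
    have e2 : 2 ^ (n + 0 + 2) = 4 * 2 ^ n := by ring
    have e3 : 2 ^ (n + 0) = 2 ^ n := by ring
    omega
  have hdec : lbLoad n false σ' + 2 ^ n = lbLoad n false σ := by
    rw [hL1, hL1']; omega
  -- machine 1 of σ' still carries the big job
  have hbig : 2 ^ (2 * n + 4) ≤ lbLoad n false σ' := by
    rw [loadf]
    have := Finset.single_le_sum
      (f := fun j => if σ' j = false then lbp n j else 0)
      (fun i _ => Nat.zero_le _) (Finset.mem_univ (LBJob.l : LBJob n))
    simpa [hl', lbp] using this
  -- total load
  have hpart : lbLoad n false σ' + lbLoad n true σ' = ∑ j : LBJob n, lbp n j := by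
    rw [loadf, loadf, ← Finset.sum_add_distrib]
    refine Finset.sum_congr rfl fun j _ => ?_
    cases h : σ' j <;> simp [h]
  have htot := lb_total_lt n hn
  have hpow : (1:ℕ) ≤ 2 ^ n := Nat.one_le_two_pow
  -- conclude
  have h2' : lbLoad n true σ' < lbLoad n false σ := by omega
  have h1' : lbLoad n false σ' < lbLoad n false σ := by omega
  calc lbCmax n σ' = max (lbLoad n false σ') (lbLoad n true σ') := rfl
    _ < lbLoad n false σ := max_lt h1' h2'
    _ ≤ lbCmax n σ := le_max_left _ _
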